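/- Let p be a prime, n ≥ 1, and let r(p,n) be the number of orbits of SL(2, ZMod p) acting by left multiplication on 2×n matrices over ZMod p. Then r(p, n+1) − r(p, n) = p^(n-1)(p^n + p − 1). -/

import Mathlib

/-- The orbit of a `2 × n` matrix over `ZMod p` under left multiplication by `SL(2, ZMod p)`. -/
def slOrbit (p n : ℕ) (M : Matrix (Fin 2) (Fin n) (ZMod p)) :
    Set (Matrix (Fin 2) (Fin n) (ZMod p)) :=
  { N | ∃ S : Matrix.SpecialLinearGroup (Fin 2) (ZMod p),
      (S : Matrix (Fin 2) (Fin 2) (ZMod p)) * M = N }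

/-- The number of orbits of `SL(2, ZMod p)` on `2 × n` matrices over `ZMod p`. -/
noncomputable def r (p n : ℕ) : ℕ :=
  Nat.card { O : Set (Matrix (Fin 2) (Fin n) (ZMod p)) // ∃ M, O = slOrbit p n M }

set_option linter.unusedSectionVars false

namespace SLCount

variable {p : ℕ}

abbrev SL2 (p : ℕ) := Matrix.SpecialLinearGroup (Fin 2) (ZMod p)

lemma mem_slOrbit_self {n : ℕ} (M : Matrix (Fin 2) (Fin n) (ZMod p)) :
    M ∈ slOrbit p n M := ⟨1, by simp⟩

lemma slOrbit_eq_of_mem {n : ℕ} {M N : Matrix (Fin 2) (Fin n) (ZMod p)}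
    (h : N ∈ slOrbit p n M) : slOrbit p n N = slOrbit p n M := by
  obtain ⟨S, hS⟩ := h
  have hback : (↑(S⁻¹) : Matrix (Fin 2) (Fin 2) (ZMod p)) * N = M := by
    rw [← hS, ← Matrix.mul_assoc, ← Matrix.SpecialLinearGroup.coe_mul, inv_mul_cancel]
    simp
  ext X
  constructor
  · rintro ⟨T, rfl⟩
    exact ⟨T * S, by rw [Matrix.SpecialLinearGroup.coe_mul, Matrix.mul_assoc, hS]⟩
  · rintro ⟨T, rfl⟩
    exact ⟨T * S⁻¹, by rw [Matrix.SpecialLinearGroup.coe_mul, Matrix.mul_assoc, hback]⟩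

/-- embed a 2×n matrix as a 2×(n+1) matrix with zero first column -/
def Emb {n : ℕ} (M : Matrix (Fin 2) (Fin n) (ZMod p)) :
    Matrix (Fin 2) (Fin (n+1)) (ZMod p) :=
  Matrix.of fun i => Fin.cons 0 (M i)

lemma Emb_injective {n : ℕ} : Function.Injective (Emb (p := p) (n := n)) := by
  intro M N h
  ext i k
  have := congrFun (congrFun h i) k.succ
  simpa [Emb] using this

lemma mul_Emb {n : ℕ} (S : SL2 p) (M : Matrix (Fin 2) (Fin n) (ZMod p)) :
    (S : Matrix (Fin 2) (Fin 2) (ZMod p)) * Emb M = Emb ((S : Matrix (Fin 2) (Fin 2) (ZMod p)) * M) := by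
  ext i j
  refine Fin.cases ?_ (fun k => ?_) j
  · simp [Matrix.mul_apply, Emb]
  · simp [Matrix.mul_apply, Emb]

def rest {n : ℕ} (M : Matrix (Fin 2) (Fin (n+1)) (ZMod p)) :
    Matrix (Fin 2) (Fin n) (ZMod p) :=
  Matrix.of fun i k => M i k.succ

lemma Emb_rest {n : ℕ} {M : Matrix (Fin 2) (Fin (n+1)) (ZMod p)}
    (h : ∀ i, M i 0 = 0) : Emb (rest M) = M := by
  ext i j
  refine Fin.cases ?_ (fun k => ?_) j
  · simpa [Emb] using (h i).symm
  · rfl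

lemma image_Emb_slOrbit {n : ℕ} (M : Matrix (Fin 2) (Fin n) (ZMod p)) :
    Emb '' slOrbit p n M = slOrbit p (n+1) (Emb M) := by
  ext N
  constructor
  · rintro ⟨X, ⟨S, rfl⟩, rfl⟩
    exact ⟨S, mul_Emb S M⟩
  · rintro ⟨S, rfl⟩
    exact ⟨_, ⟨S, rfl⟩, (mul_Emb S M).symm⟩

/-- the zero-first-column predicate on sets of matrices -/
def Z0 {n : ℕ} (O : Set (Matrix (Fin 2) (Fin (n+1)) (ZMod p))) : Prop :=
  ∀ N ∈ O, ∀ i, N i 0 = 0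

noncomputable def equivA (p n : ℕ) :
    { O : Set (Matrix (Fin 2) (Fin n) (ZMod p)) // ∃ M, O = slOrbit p n M } ≃
    { O : Set (Matrix (Fin 2) (Fin (n+1)) (ZMod p)) //
        (∃ M, O = slOrbit p (n+1) M) ∧ Z0 O } := by
  refine Equiv.ofBijective
    (fun O => ⟨Emb '' O.1, ?_, ?_⟩) ⟨?_, ?_⟩
  · obtain ⟨M, hM⟩ := O.2
    exact ⟨Emb M, by rw [hM, image_Emb_slOrbit]⟩
  · rintro N ⟨X, hX, rfl⟩ i
    rfl
  · intro O O' h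
    exact Subtype.ext (Set.image_injective.mpr Emb_injective (congrArg Subtype.val h))
  · rintro ⟨O, ⟨M, rfl⟩, hZ⟩
    have hM0 : ∀ i, M i 0 = 0 := hZ M (mem_slOrbit_self M)
    refine ⟨⟨slOrbit p n (rest M), ⟨rest M, rfl⟩⟩, Subtype.ext ?_⟩
    show Emb '' slOrbit p n (rest M) = slOrbit p (n+1) M
    rw [image_Emb_slOrbit, Emb_rest hM0]

end SLCount

namespace SLCount

variable {p : ℕ} [Fact p.Prime]

/-- a choice of nonzero coordinate -/
noncomputable def jsel {n : ℕ} (w : {w : Fin n → ZMod p // w ≠ 0}) : Fin n :=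
  (Function.ne_iff.mp w.2).choose

lemma jsel_spec {n : ℕ} (w : {w : Fin n → ZMod p // w ≠ 0}) : w.1 (jsel w) ≠ 0 :=
  (Function.ne_iff.mp w.2).choose_spec

/-- canonical-form predicate for the "rest" of matrices with first column `e₁` -/
def P {n : ℕ} (B : Matrix (Fin 2) (Fin n) (ZMod p)) : Prop :=
  ∀ h : B 1 ≠ 0, B 0 (jsel ⟨B 1, h⟩) = 0

def e1v (p : ℕ) : Fin 2 → ZMod p := ![1, 0]

/-- extend a 2×n matrix to a 2×(n+1) matrix with first column e₁ -/
def exte {n : ℕ} (B : Matrix (Fin 2) (Fin n) (ZMod p)) :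
    Matrix (Fin 2) (Fin (n+1)) (ZMod p) :=
  Matrix.of fun i => Fin.cons (e1v p i) (B i)

lemma rest_exte {n : ℕ} (B : Matrix (Fin 2) (Fin n) (ZMod p)) : rest (exte B) = B := rfl

lemma exte_rest {n : ℕ} {M : Matrix (Fin 2) (Fin (n+1)) (ZMod p)}
    (h : ∀ i, M i 0 = e1v p i) : exte (rest M) = M := by
  ext i j
  refine Fin.cases ?_ (fun k => ?_) j
  · simpa [exte] using (h i).symm
  · rfl

def Uni (b : ZMod p) : SL2 p :=
  ⟨!![1, b; 0, 1], by simp [Matrix.det_fin_two_of]⟩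

lemma Uni_row0 {n : ℕ} (b : ZMod p) (M : Matrix (Fin 2) (Fin n) (ZMod p)) (j : Fin n) :
    ((Uni b : Matrix (Fin 2) (Fin 2) (ZMod p)) * M) 0 j = M 0 j + b * M 1 j := by
  simp [Uni, Matrix.mul_apply, Fin.sum_univ_two]

lemma Uni_row1 {n : ℕ} (b : ZMod p) (M : Matrix (Fin 2) (Fin n) (ZMod p)) (j : Fin n) :
    ((Uni b : Matrix (Fin 2) (Fin 2) (ZMod p)) * M) 1 j = M 1 j := by
  simp [Uni, Matrix.mul_apply, Fin.sum_univ_two]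

lemma exists_to_e1 (v : Fin 2 → ZMod p) (hv : ∃ i, v i ≠ 0) :
    ∃ T : SL2 p, ∀ i, (T : Matrix (Fin 2) (Fin 2) (ZMod p)) i 0 * v 0 +
      (T : Matrix (Fin 2) (Fin 2) (ZMod p)) i 1 * v 1 = e1v p i := by
  by_cases h0 : v 0 = 0
  · have h1 : v 1 ≠ 0 := by
      obtain ⟨i, hi⟩ := hv
      fin_cases i
      · exact absurd h0 hi
      · exact hi
    refine ⟨⟨!![0, (v 1)⁻¹; -(v 1), 0], by
      simp [Matrix.det_fin_two_of, inv_mul_cancel₀ h1]⟩, ?_⟩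
    intro i
    fin_cases i <;> simp [e1v, h0, inv_mul_cancel₀ h1]
  · refine ⟨⟨!![(v 0)⁻¹, 0; -(v 1), v 0], by
      simp [Matrix.det_fin_two_of, inv_mul_cancel₀ h0]⟩, ?_⟩
    intro i
    fin_cases i <;> simp [e1v, inv_mul_cancel₀ h0] <;> ring

lemma stab_e1 {S : SL2 p} (h0 : (S : Matrix (Fin 2) (Fin 2) (ZMod p)) 0 0 = 1)
    (h1 : (S : Matrix (Fin 2) (Fin 2) (ZMod p)) 1 0 = 0) :
    (S : Matrix (Fin 2) (Fin 2) (ZMod p)) =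
      (Uni ((S : Matrix (Fin 2) (Fin 2) (ZMod p)) 0 1) : Matrix (Fin 2) (Fin 2) (ZMod p)) := by
  have hdet : (S : Matrix (Fin 2) (Fin 2) (ZMod p)).det = 1 := S.2
  rw [Matrix.det_fin_two, h0, h1] at hdet
  have h11 : (S : Matrix (Fin 2) (Fin 2) (ZMod p)) 1 1 = 1 := by
    simpa using hdet
  ext i j
  fin_cases i <;> fin_cases j <;> simp [Uni, h0, h1, h11]

lemma mul_mem_slOrbit' {n : ℕ} {M N : Matrix (Fin 2) (Fin n) (ZMod p)} (T : SL2 p)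
    (h : N ∈ slOrbit p n M) : (T : Matrix (Fin 2) (Fin 2) (ZMod p)) * N ∈ slOrbit p n M := by
  obtain ⟨S, rfl⟩ := h
  exact ⟨T * S, by rw [Matrix.SpecialLinearGroup.coe_mul, Matrix.mul_assoc]⟩

end SLCount

namespace SLCount

variable {p : ℕ} [Fact p.Prime]

lemma row_ext {n : ℕ} {M N : Matrix (Fin 2) (Fin n) (ZMod p)}
    (h0 : ∀ j, M 0 j = N 0 j) (h1 : ∀ j, M 1 j = N 1 j) : M = N := by
  ext i j
  fin_cases i
  · exact h0 j
  · exact h1 j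

lemma exte_col0 {n : ℕ} (B : Matrix (Fin 2) (Fin n) (ZMod p)) (i : Fin 2) :
    exte B i 0 = e1v p i := rfl

noncomputable def equivB (p n : ℕ) [Fact p.Prime] :
    { B : Matrix (Fin 2) (Fin n) (ZMod p) // P B } ≃
    { O : Set (Matrix (Fin 2) (Fin (n+1)) (ZMod p)) //
        (∃ M, O = slOrbit p (n+1) M) ∧ ¬ Z0 O } := by
  refine Equiv.ofBijective
    (fun B => ⟨slOrbit p (n+1) (exte B.1), ⟨exte B.1, rfl⟩, ?_⟩) ⟨?_, ?_⟩
  · intro hZ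
    have h := hZ (exte B.1) (mem_slOrbit_self _) 0
    rw [exte_col0] at h
    simp [e1v] at h
  · rintro ⟨B, hB⟩ ⟨B', hB'⟩ h
    have horb : slOrbit p (n+1) (exte B) = slOrbit p (n+1) (exte B') :=
      congrArg Subtype.val h
    have hmem : exte B' ∈ slOrbit p (n+1) (exte B) := by
      rw [horb]; exact mem_slOrbit_self _
    obtain ⟨S, hS⟩ := hmem
    -- first column of S
    have hcol : ∀ i, (S : Matrix (Fin 2) (Fin 2) (ZMod p)) i 0 = e1v p i := by
      intro i
      have := congrFun (congrFun hS i) 0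
      rw [Matrix.mul_apply, Fin.sum_univ_two] at this
      simp only [exte_col0] at this
      simpa [e1v] using this
    have hS0 : (S : Matrix (Fin 2) (Fin 2) (ZMod p)) 0 0 = 1 := by
      simpa [e1v] using hcol 0
    have hS1 : (S : Matrix (Fin 2) (Fin 2) (ZMod p)) 1 0 = 0 := by
      simpa [e1v] using hcol 1
    set b := (S : Matrix (Fin 2) (Fin 2) (ZMod p)) 0 1 with hb
    have hSU : (S : Matrix (Fin 2) (Fin 2) (ZMod p)) =
        (Uni b : Matrix (Fin 2) (Fin 2) (ZMod p)) := stab_e1 hS0 hS1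
    rw [hSU] at hS
    have hrow1 : ∀ k : Fin n, B' 1 k = B 1 k := by
      intro k
      have := congrFun (congrFun hS 1) k.succ
      rw [Uni_row1] at this
      exact this.symm
    have hrow0 : ∀ k : Fin n, B' 0 k = B 0 k + b * B 1 k := by
      intro k
      have := congrFun (congrFun hS 0) k.succ
      rw [Uni_row0] at this
      exact this.symm
    have hrow1' : B' 1 = B 1 := funext hrow1
    by_cases h1 : B 1 = 0
    · refine Subtype.ext (row_ext (fun k => ?_) (fun k => ?_))
      · show B 0 k = B' 0 k
        rw [hrow0 k]
        have : B 1 k = 0 := congrFun h1 k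
        rw [this, mul_zero, add_zero]
      · show B 1 k = B' 1 k
        exact (hrow1 k).symm
    · have h1' : B' 1 ≠ 0 := hrow1' ▸ h1
      have hjeq : jsel ⟨B' 1, h1'⟩ = jsel ⟨B 1, h1⟩ := by
        congr 1
        exact Subtype.ext hrow1'
      set j0 := jsel ⟨B 1, h1⟩ with hj0def
      have hPB : B 0 j0 = 0 := hB h1
      have hPB' : B' 0 j0 = 0 := by rw [← hjeq]; exact hB' h1'
      have hbz : b = 0 := by
        have := hrow0 j0
        rw [hPB', hPB, zero_add] at this
        have hj0 : B 1 j0 ≠ 0 := jsel_spec ⟨B 1, h1⟩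
        field_simp at this
        exact (mul_eq_zero.mp this.symm).resolve_right hj0
      refine Subtype.ext (row_ext (fun k => ?_) (fun k => ?_))
      · show B 0 k = B' 0 k
        rw [hrow0 k, hbz, zero_mul, add_zero]
      · show B 1 k = B' 1 k
        exact (hrow1 k).symm
  · rintro ⟨O, ⟨M, rfl⟩, hZ⟩
    rw [Z0] at hZ
    push_neg at hZ
    obtain ⟨N, hN, i0, hi0⟩ := hZ
    obtain ⟨T, hT⟩ := exists_to_e1 (fun k => N k 0) ⟨i0, hi0⟩
    set M1 := (T : Matrix (Fin 2) (Fin 2) (ZMod p)) * N with hM1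
    have hM1mem : M1 ∈ slOrbit p (n+1) M := mul_mem_slOrbit' T hN
    have hM1col : ∀ i, M1 i 0 = e1v p i := by
      intro i
      rw [hM1, Matrix.mul_apply, Fin.sum_univ_two]
      exact hT i
    by_cases h1 : rest M1 1 = 0
    · have hP : P (rest M1) := fun h => absurd h1 h
      refine ⟨⟨rest M1, hP⟩, Subtype.ext ?_⟩
      show slOrbit p (n+1) (exte (rest M1)) = slOrbit p (n+1) M
      rw [exte_rest hM1col]
      exact slOrbit_eq_of_mem hM1mem
    · set j0 := jsel ⟨rest M1 1, h1⟩ with hj0def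
      have hj0 : rest M1 1 j0 ≠ 0 := jsel_spec ⟨rest M1 1, h1⟩
      set b := -(rest M1 0 j0) * (rest M1 1 j0)⁻¹ with hbdef
      set M2 := (Uni b : Matrix (Fin 2) (Fin 2) (ZMod p)) * M1 with hM2
      have hM2mem : M2 ∈ slOrbit p (n+1) M := mul_mem_slOrbit' _ hM1mem
      have hM2col : ∀ i, M2 i 0 = e1v p i := by
        intro i
        fin_cases i
        · show ((Uni b : Matrix (Fin 2) (Fin 2) (ZMod p)) * M1) 0 0 = e1v p 0
          rw [Uni_row0, hM1col 0, hM1col 1]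
          simp [e1v]
        · show ((Uni b : Matrix (Fin 2) (Fin 2) (ZMod p)) * M1) 1 0 = e1v p 1
          rw [Uni_row1, hM1col 1]
      have hrow1 : rest M2 1 = rest M1 1 := by
        funext k
        exact Uni_row1 b M1 k.succ
      have hr0 : rest M2 0 j0 = 0 := by
        have : M2 0 j0.succ = M1 0 j0.succ + b * M1 1 j0.succ := Uni_row0 b M1 j0.succ
        show M2 0 j0.succ = 0
        rw [this, hbdef]
        have : M1 1 j0.succ = rest M1 1 j0 := rfl
        rw [this]
        have h0 : M1 0 j0.succ = rest M1 0 j0 := rfl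
        rw [h0]
        field_simp
        ring
      have hP : P (rest M2) := by
        intro h
        have hjeq : jsel ⟨rest M2 1, h⟩ = j0 := by
          rw [hj0def]
          congr 1
          exact Subtype.ext hrow1
        rw [hjeq]
        exact hr0
      refine ⟨⟨rest M2, hP⟩, Subtype.ext ?_⟩
      show slOrbit p (n+1) (exte (rest M2)) = slOrbit p (n+1) M
      rw [exte_rest hM2col]
      exact slOrbit_eq_of_mem hM2mem

end SLCount

namespace SLCount

variable {p : ℕ} [Fact p.Prime]

noncomputable def equivFiber {n : ℕ} (j : Fin n) :
    {u : Fin n → ZMod p // u j = 0} ≃ ({i : Fin n // i ≠ j} → ZMod p) where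
  toFun u i := u.1 i.1
  invFun g := ⟨fun i => if h : i = j then 0 else g ⟨i, h⟩, by simp⟩
  left_inv u := by
    apply Subtype.ext
    funext i
    dsimp only
    split_ifs with h
    · rw [h]; exact u.2.symm
    · rfl
  right_inv g := by
    funext i
    dsimp only
    rw [dif_neg i.2]

lemma card_fiber {n : ℕ} (j : Fin n) :
    Nat.card {u : Fin n → ZMod p // u j = 0} = p ^ (n - 1) := by
  classical
  rw [Nat.card_congr (equivFiber j), Nat.card_eq_fintype_card, Fintype.card_fun]
  have h1 : Fintype.card {i : Fin n // ¬ (i = j)} = n - 1 := by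
    rw [Fintype.card_subtype_compl, Fintype.card_subtype_eq, Fintype.card_fin]
  rw [ZMod.card, h1]

lemma card_ne_zero_vec (n : ℕ) :
    Nat.card {w : Fin n → ZMod p // w ≠ 0} = p ^ n - 1 := by
  classical
  simp only [ne_eq]
  rw [Nat.card_eq_fintype_card, Fintype.card_subtype_compl, Fintype.card_subtype_eq,
    Fintype.card_fun, ZMod.card, Fintype.card_fin]

noncomputable def equivRow1Zero (n : ℕ) :
    {B : Matrix (Fin 2) (Fin n) (ZMod p) // B 1 = 0} ≃ (Fin n → ZMod p) where
  toFun B := B.1 0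
  invFun u := ⟨Matrix.of ![u, 0], rfl⟩
  left_inv B := by
    apply Subtype.ext
    refine row_ext (fun j => rfl) (fun j => ?_)
    show (0 : Fin n → ZMod p) j = B.1 1 j
    rw [B.2]
  right_inv u := rfl

noncomputable def equivSigma (n : ℕ) :
    {B : Matrix (Fin 2) (Fin n) (ZMod p) // P B ∧ ¬ B 1 = 0} ≃
    (Σ w : {w : Fin n → ZMod p // w ≠ 0}, {u : Fin n → ZMod p // u (jsel w) = 0}) where
  toFun B := ⟨⟨B.1 1, B.2.2⟩, ⟨B.1 0, B.2.1 B.2.2⟩⟩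
  invFun x := ⟨Matrix.of ![x.2.1, x.1.1],
    by
      intro h
      have hj : jsel ⟨(Matrix.of ![x.2.1, x.1.1] : Matrix (Fin 2) (Fin n) (ZMod p)) 1, h⟩
          = jsel x.1 := by
        congr 1
      show x.2.1 (jsel ⟨(Matrix.of ![x.2.1, x.1.1] : Matrix (Fin 2) (Fin n) (ZMod p)) 1, h⟩) = 0
      rw [hj]
      exact x.2.2,
    x.1.2⟩
  left_inv B := by
    apply Subtype.ext
    exact row_ext (fun j => rfl) (fun j => rfl)
  right_inv x := rfl

noncomputable def equivSplit (n : ℕ) :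
    {B : Matrix (Fin 2) (Fin n) (ZMod p) // P B} ≃
    ({B : Matrix (Fin 2) (Fin n) (ZMod p) // B 1 = 0} ⊕
      (Σ w : {w : Fin n → ZMod p // w ≠ 0}, {u : Fin n → ZMod p // u (jsel w) = 0})) := by
  classical
  refine (Equiv.sumCompl (fun x : {B : Matrix (Fin 2) (Fin n) (ZMod p) // P B} =>
    x.1 1 = 0)).symm.trans (Equiv.sumCongr ?_ ?_)
  · refine (Equiv.subtypeSubtypeEquivSubtypeInter P (fun B => B 1 = 0)).trans
      (Equiv.subtypeEquivRight fun B => ?_)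
    exact ⟨And.right, fun h => ⟨fun h1 => absurd h h1, h⟩⟩
  · exact (Equiv.subtypeSubtypeEquivSubtypeInter P (fun B => ¬ B 1 = 0)).trans (equivSigma n)

lemma cardP (n : ℕ) :
    Nat.card {B : Matrix (Fin 2) (Fin n) (ZMod p) // P B} =
      p ^ n + (p ^ n - 1) * p ^ (n - 1) := by
  classical
  rw [Nat.card_congr (equivSplit n), Nat.card_sum,
    Nat.card_congr (equivRow1Zero n)]
  congr 1
  · rw [Nat.card_eq_fintype_card, Fintype.card_fun, ZMod.card, Fintype.card_fin]
  · rw [Nat.card_eq_fintype_card, Fintype.card_sigma]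
    have : ∀ w : {w : Fin n → ZMod p // w ≠ 0},
        Fintype.card {u : Fin n → ZMod p // u (jsel w) = 0} = p ^ (n - 1) := by
      intro w
      rw [← Nat.card_eq_fintype_card]
      exact card_fiber (jsel w)
    rw [Finset.sum_congr rfl (fun w _ => this w), Finset.sum_const, Finset.card_univ,
      ← Nat.card_eq_fintype_card, card_ne_zero_vec, smul_eq_mul]

end SLCount

theorem orbit_count_difference' (p n : ℕ) (hp : p.Prime) (hn : 1 ≤ n) :
    r p (n + 1) - r p n = p ^ (n - 1) * (p ^ n + p - 1) := by
  haveI : Fact p.Prime := ⟨hp⟩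
  classical
  have key : r p (n + 1) = r p n + (p ^ n + (p ^ n - 1) * p ^ (n - 1)) := by
    rw [show r p (n+1) = Nat.card { O : Set (Matrix (Fin 2) (Fin (n+1)) (ZMod p)) //
        ∃ M, O = slOrbit p (n+1) M } from rfl,
      Nat.card_congr (Equiv.sumCompl (fun O : { O : Set (Matrix (Fin 2) (Fin (n+1)) (ZMod p)) //
        ∃ M, O = slOrbit p (n+1) M } => SLCount.Z0 O.1)).symm,
      Nat.card_sum]
    congr 1
    · rw [Nat.card_congr ((Equiv.subtypeSubtypeEquivSubtypeInter _ _).trans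
        (SLCount.equivA p n).symm)]
      rfl
    · rw [Nat.card_congr ((Equiv.subtypeSubtypeEquivSubtypeInter _ _).trans
        (SLCount.equivB p n).symm), SLCount.cardP]
  have hpn : p ^ n = p ^ (n - 1) * p := by
    rw [← pow_succ]
    congr 1
    omega
  have harith : p ^ n + (p ^ n - 1) * p ^ (n - 1) = p ^ (n - 1) * (p ^ n + p - 1) := by
    have h1 : 1 ≤ p ^ (n - 1) := Nat.one_le_pow _ _ hp.pos
    rw [hpn]
    have h2 : 1 ≤ p ^ (n - 1) * p := by simpa using Nat.mul_le_mul h1 hp.pos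
    zify [h2, le_trans h2 (Nat.le_add_right _ _)]
    ring
  rw [key, harith]
  exact Nat.add_sub_cancel_left _ _


theorem orbit_count_difference (p n : ℕ) (hp : p.Prime) (hn : 1 ≤ n) :
    r p (n + 1) - r p n = p ^ (n - 1) * (p ^ n + p - 1) := orbit_count_difference' p n hp hn
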